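/- Let a, b : ℤ × ℕ → ℝ≥0 satisfy a(j, n+1) + b(j, n+1) = a(j-1, n) + b(j+1, n) for all j ∈ ℤ, n ∈ ℕ. Then for any j₁ ∈ ℤ and 0 ≤ n₀ ≤ n₁, the lateral boundary sum satisfies Σ_{n=0}^{n₁-n₀} a(j₁+n, n₁-n) + Σ_{n=0}^{n₁-n₀} b(j₁-n, n₁-n) ≤ Σ_{j = j₁ - n₁ + n₀}^{j₁ + n₁ - n₀} (a(j, n₀) + b(j, n₀)). -/

import Mathlib

lemma shift_sum (f : ℤ → ℝ) (L U c : ℤ) :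
    ∑ j ∈ Finset.Icc L U, f (j + c) = ∑ j ∈ Finset.Icc (L+c) (U+c), f j := by
  rw [← Finset.map_add_right_Icc, Finset.sum_map]; rfl

lemma key (a b : ℤ → ℕ → ℝ)
    (ha : ∀ j n, 0 ≤ a j n) (hb : ∀ j n, 0 ≤ b j n)
    (hcons : ∀ (j : ℤ) (n : ℕ), a j (n+1) + b j (n+1) = a (j-1) n + b (j+1) n)
    (j₁ : ℤ) (n₁ : ℕ) :
    ∀ m, m ≤ n₁ →
    (∑ n ∈ Finset.range (m + 1), a (j₁ + (n : ℤ)) (n₁ - n))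
      + (∑ n ∈ Finset.range (m + 1), b (j₁ - (n : ℤ)) (n₁ - n))
      ≤ ∑ j ∈ Finset.Icc (j₁ - (m : ℤ)) (j₁ + (m : ℤ)), (a j (n₁ - m) + b j (n₁ - m)) := by
  intro m
  induction m with
  | zero => intro _; simp
  | succ m ih =>
    intro hm
    have hm' : m ≤ n₁ := le_of_lt (Nat.lt_of_succ_le hm)
    set k := n₁ - (m + 1) with hk
    have hkk : n₁ - m = k + 1 := by omega
    have step : ∑ j ∈ Finset.Icc (j₁ - (m : ℤ)) (j₁ + (m : ℤ)), (a j (n₁ - m) + b j (n₁ - m))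
        = (∑ j ∈ Finset.Icc (j₁ - (m : ℤ) - 1) (j₁ + (m : ℤ) - 1), a j k)
          + (∑ j ∈ Finset.Icc (j₁ - (m : ℤ) + 1) (j₁ + (m : ℤ) + 1), b j k) := by
      rw [Finset.sum_congr rfl (fun j _ => by rw [hkk, hcons j k]),
        Finset.sum_add_distrib]
      congr 1
      · have := shift_sum (fun j => a j k) (j₁ - (m:ℤ)) (j₁ + (m:ℤ)) (-1)
        simp only [← sub_eq_add_neg] at this
        exact this
      · exact shift_sum (fun j => b j k) (j₁ - (m:ℤ)) (j₁ + (m:ℤ)) 1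
    have ha' : ∑ j ∈ Finset.Icc (j₁ - (m : ℤ) - 1) (j₁ + (m : ℤ) - 1), a j k
        + a (j₁ + ((m : ℤ) + 1)) k
        ≤ ∑ j ∈ Finset.Icc (j₁ - ((m : ℤ) + 1)) (j₁ + ((m : ℤ) + 1)), a j k := by
      have hins : insert (j₁ + ((m : ℤ) + 1)) (Finset.Icc (j₁ - (m : ℤ) - 1) (j₁ + (m : ℤ) - 1))
          ⊆ Finset.Icc (j₁ - ((m : ℤ) + 1)) (j₁ + ((m : ℤ) + 1)) := by
        intro x hx
        simp only [Finset.mem_insert, Finset.mem_Icc] at hx ⊢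
        omega
      calc _ = ∑ j ∈ insert (j₁ + ((m : ℤ) + 1)) (Finset.Icc (j₁ - (m : ℤ) - 1) (j₁ + (m : ℤ) - 1)), a j k := by
              rw [Finset.sum_insert (by simp only [Finset.mem_Icc]; omega)]; ring
        _ ≤ _ := Finset.sum_le_sum_of_subset_of_nonneg hins (fun j _ _ => ha j k)
    have hb' : ∑ j ∈ Finset.Icc (j₁ - (m : ℤ) + 1) (j₁ + (m : ℤ) + 1), b j k
        + b (j₁ - ((m : ℤ) + 1)) k
        ≤ ∑ j ∈ Finset.Icc (j₁ - ((m : ℤ) + 1)) (j₁ + ((m : ℤ) + 1)), b j k := by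
      have hins : insert (j₁ - ((m : ℤ) + 1)) (Finset.Icc (j₁ - (m : ℤ) + 1) (j₁ + (m : ℤ) + 1))
          ⊆ Finset.Icc (j₁ - ((m : ℤ) + 1)) (j₁ + ((m : ℤ) + 1)) := by
        intro x hx
        simp only [Finset.mem_insert, Finset.mem_Icc] at hx ⊢
        omega
      calc _ = ∑ j ∈ insert (j₁ - ((m : ℤ) + 1)) (Finset.Icc (j₁ - (m : ℤ) + 1) (j₁ + (m : ℤ) + 1)), b j k := by
              rw [Finset.sum_insert (by simp only [Finset.mem_Icc]; omega)]; ring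
        _ ≤ _ := Finset.sum_le_sum_of_subset_of_nonneg hins (fun j _ _ => hb j k)
    have lhs_eq :
        (∑ n ∈ Finset.range (m + 1 + 1), a (j₁ + (n : ℤ)) (n₁ - n))
          + (∑ n ∈ Finset.range (m + 1 + 1), b (j₁ - (n : ℤ)) (n₁ - n))
        = ((∑ n ∈ Finset.range (m + 1), a (j₁ + (n : ℤ)) (n₁ - n))
          + (∑ n ∈ Finset.range (m + 1), b (j₁ - (n : ℤ)) (n₁ - n)))
          + (a (j₁ + ((m : ℤ) + 1)) k + b (j₁ - ((m : ℤ) + 1)) k) := by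
      rw [Finset.sum_range_succ, Finset.sum_range_succ (fun n => b (j₁ - (n : ℤ)) (n₁ - n))]
      push_cast
      ring
    rw [lhs_eq]
    calc _ ≤ (∑ j ∈ Finset.Icc (j₁ - (m : ℤ)) (j₁ + (m : ℤ)), (a j (n₁ - m) + b j (n₁ - m)))
              + (a (j₁ + ((m : ℤ) + 1)) k + b (j₁ - ((m : ℤ) + 1)) k) := by
            exact add_le_add (ih hm') le_rfl
      _ = ((∑ j ∈ Finset.Icc (j₁ - (m : ℤ) - 1) (j₁ + (m : ℤ) - 1), a j k)
            + a (j₁ + ((m : ℤ) + 1)) k)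
          + ((∑ j ∈ Finset.Icc (j₁ - (m : ℤ) + 1) (j₁ + (m : ℤ) + 1), b j k)
            + b (j₁ - ((m : ℤ) + 1)) k) := by rw [step]; ring
      _ ≤ (∑ j ∈ Finset.Icc (j₁ - ((m : ℤ) + 1)) (j₁ + ((m : ℤ) + 1)), a j k)
          + (∑ j ∈ Finset.Icc (j₁ - ((m : ℤ) + 1)) (j₁ + ((m : ℤ) + 1)), b j k) :=
            add_le_add ha' hb'
      _ = ∑ j ∈ Finset.Icc (j₁ - ((m : ℤ) + 1)) (j₁ + ((m : ℤ) + 1)),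
            (a j (n₁ - (m + 1)) + b j (n₁ - (m + 1))) := by
            rw [← Finset.sum_add_distrib, ← hk]
      _ = _ := by rw [← hk]; push_cast; ring_nf

theorem stmt5 (a b : ℤ → ℕ → ℝ)
    (ha : ∀ j n, 0 ≤ a j n) (hb : ∀ j n, 0 ≤ b j n)
    (hcons : ∀ (j : ℤ) (n : ℕ), a j (n+1) + b j (n+1) = a (j-1) n + b (j+1) n)
    (j₁ : ℤ) (n₀ n₁ : ℕ) (h : n₀ ≤ n₁) :
    (∑ n ∈ Finset.range (n₁ - n₀ + 1), a (j₁ + (n : ℤ)) (n₁ - n))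
      + (∑ n ∈ Finset.range (n₁ - n₀ + 1), b (j₁ - (n : ℤ)) (n₁ - n))
      ≤ ∑ j ∈ Finset.Icc (j₁ - (n₁ : ℤ) + (n₀ : ℤ)) (j₁ + (n₁ : ℤ) - (n₀ : ℤ)),
          (a j n₀ + b j n₀) := by
  have := key a b ha hb hcons j₁ n₁ (n₁ - n₀) (Nat.sub_le _ _)
  have h1 : n₁ - (n₁ - n₀) = n₀ := by omega
  have h2 : ((n₁ - n₀ : ℕ) : ℤ) = (n₁ : ℤ) - (n₀ : ℤ) := by omega
  rw [h1, h2] at this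
  convert this using 3 <;> ring
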